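/- In the Galois setup: (i) for every σ = (Z,P) ∈ Stab(T_L)_p and every group homomorphism U : K(T_L) → ℂ, one has ‖U∘K(p^*)‖_{p_*σ} ≤ ‖U‖_σ in [0,∞]; (ii) for every σ′ = (Z′,P′) ∈ Stab(T) such that the pullback pair p^*σ′ is a locally finite stability condition on T_L, and every group homomorphism U′ : K(T) → ℂ, one has ‖U′∘K(p_*)‖_{p^*σ′} ≤ ‖U′‖_{σ′} in [0,∞]. -/

import Mathlib

open CategoryTheory Limits Pretriangulated ENNReal

noncomputable section

namespace StabilityPaper

universe v u v₂ u₂ v₃ u₃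

/-- The data of a "prestability condition": a central charge, given as a function on
objects (which, when required to be additive on distinguished triangles, is the same
as a group homomorphism `K(T) → ℂ` on the Grothendieck group), and a collection of
sets of objects `P φ` for `φ ∈ ℝ`. -/
structure PreStab (C : Type u) where
  Z : C → ℂ
  P : ℝ → Set C

section Triangulated

variable {C : Type u} [Category.{v} C] [Preadditive C] [HasZeroObject C] [HasShift C ℤ]
  [∀ n : ℤ, (shiftFunctor C n).Additive] [Pretriangulated C] [HasFiniteBiproducts C]

/-- A Harder–Narasimhan filtration of `E` with respect to the collection of
subcategories `P`: distinguished triangles `E_{i-1} → E_i → A_i` with `E_0 = 0`,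
`E_n ≅ E`, `A_i` a nonzero object of `P (φ i)` and strictly decreasing phases `φ`. -/
structure HNFiltration (P : ℝ → Set C) (E : C) where
  n : ℕ
  npos : 0 < n
  Fil : Fin (n + 1) → C
  A : Fin n → C
  phi : Fin n → ℝ
  fil_zero : IsZero (Fil 0)
  fil_last : Nonempty (Fil (Fin.last n) ≅ E)
  A_mem : ∀ i, A i ∈ P (phi i)
  A_ne : ∀ i, ¬ IsZero (A i)
  phi_anti : StrictAnti phi
  tri : ∀ i : Fin n, ∃ (f : Fil i.castSucc ⟶ Fil i.succ) (g : Fil i.succ ⟶ A i)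
    (h : A i ⟶ (Fil i.castSucc)⟦(1 : ℤ)⟧), Triangle.mk f g h ∈ distTriang C

/-- The condition that the subcategories `P φ` are strictly full additive
subcategories. -/
structure IsSlicing (P : ℝ → Set C) : Prop where
  iso_mem : ∀ (φ : ℝ) (X Y : C), Nonempty (X ≅ Y) → X ∈ P φ → Y ∈ P φ
  zero_mem : ∀ (φ : ℝ) (X : C), IsZero X → X ∈ P φ
  sum_mem : ∀ (φ : ℝ) (X Y : C), X ∈ P φ → Y ∈ P φ → (X ⊞ Y) ∈ P φ

/-- The axioms (SC1)-(SC4) of a stability condition on a triangulated category,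
together with the requirements that the `P φ` are strictly full additive subcategories
and that `Z` is additive on distinguished triangles (i.e. descends to a group
homomorphism on the Grothendieck group). -/
structure IsStabCond (σ : PreStab C) : Prop where
  slicing : IsSlicing σ.P
  zadd : ∀ T ∈ distTriang C, σ.Z T.obj₂ = σ.Z T.obj₁ + σ.Z T.obj₃
  sc1 : ∀ (φ : ℝ) (E : C), E ∈ σ.P φ → ¬ IsZero E →
    ∃ m : ℝ, 0 < m ∧ σ.Z E = (m : ℂ) * Complex.exp ((Real.pi : ℂ) * φ * Complex.I)
  sc2 : ∀ (φ : ℝ) (E : C), (E⟦(1 : ℤ)⟧ ∈ σ.P (φ + 1)) ↔ E ∈ σ.P φ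
  sc3 : ∀ (φ₁ φ₂ : ℝ), φ₂ < φ₁ → ∀ E₁ ∈ σ.P φ₁, ∀ E₂ ∈ σ.P φ₂, ∀ f : E₁ ⟶ E₂, f = 0
  sc4 : ∀ E : C, ¬ IsZero E → Nonempty (HNFiltration σ.P E)

/-- The extension-closed subcategory generated by a set of objects. -/
inductive extClosure (S : Set C) : C → Prop
  | of {X : C} : X ∈ S → extClosure S X
  | zero {X : C} : IsZero X → extClosure S X
  | iso {X Y : C} : (X ≅ Y) → extClosure S X → extClosure S Y
  | ext (T : Triangle C) (hT : T ∈ distTriang C) (h₁ : extClosure S T.obj₁)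
      (h₃ : extClosure S T.obj₃) : extClosure S T.obj₂

/-- `A` is a strict subobject of `B` inside the subcategory `𝒜`: there is a
distinguished triangle `A → B → Q` with `Q` a nonzero object of `𝒜`. -/
def StrictSubIn (𝒜 : Set C) (A B : C) : Prop :=
  A ∈ 𝒜 ∧ B ∈ 𝒜 ∧ ∃ (f : A ⟶ B) (Q : C) (g : B ⟶ Q) (h : Q ⟶ A⟦(1 : ℤ)⟧),
    Q ∈ 𝒜 ∧ ¬ IsZero Q ∧ Triangle.mk f g h ∈ distTriang C

/-- `B` is a strict quotient of `A` inside the subcategory `𝒜`: there is a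
distinguished triangle `K → A → B` with `K` a nonzero object of `𝒜`. -/
def StrictQuotIn (𝒜 : Set C) (A B : C) : Prop :=
  A ∈ 𝒜 ∧ B ∈ 𝒜 ∧ ∃ (K : C) (f : K ⟶ A) (g : A ⟶ B) (h : B ⟶ K⟦(1 : ℤ)⟧),
    K ∈ 𝒜 ∧ ¬ IsZero K ∧ Triangle.mk f g h ∈ distTriang C

/-- A subcategory is of finite length if it is Artinian (no infinite chains of strict
subobjects) and Noetherian (no infinite chains of strict quotients). -/
def FiniteLengthIn (𝒜 : Set C) : Prop :=
  (¬ ∃ c : ℕ → C, ∀ n, StrictSubIn 𝒜 (c (n + 1)) (c n)) ∧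
  (¬ ∃ c : ℕ → C, ∀ n, StrictQuotIn 𝒜 (c n) (c (n + 1)))

/-- Local finiteness of a prestability condition. -/
def LocallyFinite (σ : PreStab C) : Prop :=
  ∃ ε : ℝ, 0 < ε ∧ ∀ φ : ℝ,
    FiniteLengthIn (setOf (extClosure (⋃ ψ ∈ Set.Ioo (φ - ε) (φ + ε), σ.P ψ)))

/-- A locally finite stability condition. -/
def IsStabilityCondition (σ : PreStab C) : Prop :=
  IsStabCond σ ∧ LocallyFinite σ

variable (C) in
/-- The set of locally finite stability conditions on `C`. -/
abbrev Stab := {σ : PreStab C // IsStabilityCondition σ}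

/-- The largest phase `φ⁺(E)` appearing in a Harder–Narasimhan filtration of `E`
(well defined, by uniqueness of Harder–Narasimhan filtrations, for a stability
condition; here defined as a supremum over all HN filtrations). -/
def phiPlus (σ : PreStab C) (E : C) : ℝ :=
  sSup {x | ∃ h : HNFiltration σ.P E, x = h.phi ⟨0, h.npos⟩}

/-- The smallest phase `φ⁻(E)` appearing in a Harder–Narasimhan filtration of `E`. -/
def phiMinus (σ : PreStab C) (E : C) : ℝ :=
  sSup {x | ∃ h : HNFiltration σ.P E, x = h.phi ⟨h.n - 1, Nat.sub_lt h.npos one_pos⟩}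

/-- The mass `m_σ(E) = ∑ |Z(A_i)|` of an object. -/
def mass (σ : PreStab C) (E : C) : ℝ :=
  sSup {x | ∃ h : HNFiltration σ.P E, x = ∑ i, ‖σ.Z (h.A i)‖}

/-- Bridgeland's generalized metric on the space of stability conditions, with values
in `[0, ∞]`. -/
def stabDist (σ τ : PreStab C) : ℝ≥0∞ :=
  ⨆ E : {E : C // ¬ IsZero E},
    ENNReal.ofReal (max |phiMinus σ E.1 - phiMinus τ E.1|
      (max |phiPlus σ E.1 - phiPlus τ E.1| |Real.log (mass σ E.1 / mass τ E.1)|))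

/-- The topology induced by the generalized metric: the topology generated by
open balls. -/
instance : TopologicalSpace (Stab C) :=
  TopologicalSpace.generateFrom
    {U | ∃ (σ : Stab C) (r : ℝ≥0∞), U = {τ : Stab C | stabDist σ.1 τ.1 < r}}

end Triangulated

section Functoriality

variable {C : Type u} [Category.{v} C] {D : Type u₂} [Category.{v₂} D]

/-- Given a functor `p : C ⥤ D` and a prestability condition `σ` on `D`, the
"pushforward" prestability condition on `C`: its central charge is `Z ∘ K(p)` and its
slicing is `P' φ = {E | p(E) ∈ P φ}`.  (When `p = p^* : D^b(X) → D^b(X_L)`, this is the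
pushforward `p_* σ` of a stability condition on `X_L`; when `p = p_* : D^b(X_L) → D^b(X)`,
this is the pullback `p^* σ` of a stability condition on `X`.) -/
def pushforward (p : C ⥤ D) (σ : PreStab D) : PreStab C where
  Z E := σ.Z (p.obj E)
  P φ := {E | p.obj E ∈ σ.P φ}

end Functoriality

section GroupAction

variable {C : Type u} [Category.{v} C] {G : Type} [Group G]

/-- The action of a group element `g` on prestability conditions:
`g • (Z, P) = (Z ∘ K(g_*), g^* P)`, where `g_* = (g⁻¹)^*` and `(g^* P)(φ)` is the
strictly full image of `P φ` under `g^*`. -/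
def gAct (gst : G → C ⥤ C) (g : G) (σ : PreStab C) : PreStab C where
  Z E := σ.Z ((gst g⁻¹).obj E)
  P φ := {E | ∃ X ∈ σ.P φ, Nonempty ((gst g).obj X ≅ E)}

/-- The cocycle condition for a `G`-linearization `lam` of an object `X`. -/
def CocycleLin (gst : G → C ⥤ C) (actMul : ∀ g h : G, gst h ⋙ gst g ≅ gst (g * h))
    (X : C) (lam : ∀ g : G, X ≅ (gst g).obj X) : Prop :=
  ∀ g h : G, (lam (g * h)).hom =
    (lam g).hom ≫ (gst g).map ((lam h).hom) ≫ (actMul g h).hom.app X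

/-- Compatibility of a morphism with `G`-linearizations of its source and target. -/
def LinHomCompat (gst : G → C ⥤ C) {X Y : C}
    (lamX : ∀ g : G, X ≅ (gst g).obj X) (lamY : ∀ g : G, Y ≅ (gst g).obj Y)
    (f : X ⟶ Y) : Prop :=
  ∀ g : G, f ≫ (lamY g).hom = (lamX g).hom ≫ (gst g).map f

/-- A function on objects which is additive on distinguished triangles; this is the
same as a group homomorphism on the Grothendieck group. -/
def AdditiveOnTriangles {C : Type u₂} [Category.{v₂} C] [Preadditive C] [HasZeroObject C]
    [HasShift C ℤ] [∀ n : ℤ, (shiftFunctor C n).Additive] [Pretriangulated C]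
    (U : C → ℂ) : Prop :=
  ∀ T ∈ distTriang C, U T.obj₂ = U T.obj₁ + U T.obj₃

/-- Bridgeland's generalized norm `‖U‖_σ` on central charges, with values in `[0,∞]`:
the supremum over nonzero `σ`-semistable objects `E` of `|U(E)|/|Z(E)|`. -/
noncomputable def stabNorm (σ : PreStab C) (U : C → ℂ) : ℝ≥0∞ :=
  ⨆ E : {E : C // ¬ IsZero E ∧ ∃ φ : ℝ, E ∈ σ.P φ},
    ENNReal.ofReal (‖U E.1‖ / ‖σ.Z E.1‖)

end GroupAction

section Descent

variable {C₁ : Type u} [Category.{v} C₁] {C₂ : Type u₂} [Category.{v₂} C₂]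
  {G : Type} [Group G]

/-- The Galois descent hypothesis: the natural functor from `T` to the category of
`G`-linearized objects of `T_L`, sending `E` to `p^* E` with its canonical
linearization, is an equivalence of categories.  This is expressed by saying that it
is fully faithful (morphisms compatible with the linearizations descend uniquely) and
essentially surjective (every `G`-linearized object is isomorphic, compatibly with the
linearizations, to some `p^* E` with its canonical linearization). -/
def GaloisDescent (pstar : C₁ ⥤ C₂) (gst : G → C₂ ⥤ C₂)
    (actMul : ∀ g h : G, gst h ⋙ gst g ≅ gst (g * h))
    (pIso : ∀ g : G, pstar ≅ pstar ⋙ gst g) : Prop :=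
  (∀ (E F : C₁) (f' : pstar.obj E ⟶ pstar.obj F),
      LinHomCompat gst (fun g => (pIso g).app E) (fun g => (pIso g).app F) f' →
      ∃! f : E ⟶ F, pstar.map f = f') ∧
  (∀ (X : C₂) (lam : ∀ g : G, X ≅ (gst g).obj X), CocycleLin gst actMul X lam →
      ∃ (E : C₁) (u : pstar.obj E ≅ X),
        LinHomCompat gst (fun g => (pIso g).app E) lam u.hom)

end Descent


section NormAux

open ZeroObject

/-- An additive-on-triangles function vanishes on zero objects. -/
theorem zadd_eq_zero_of_isZero {D : Type u₂} [Category.{v₂} D] [Preadditive D]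
    [HasZeroObject D] [HasShift D ℤ] [∀ n : ℤ, (shiftFunctor D n).Additive]
    [Pretriangulated D] {Z : D → ℂ}
    (hZ : ∀ T ∈ distTriang D, Z T.obj₂ = Z T.obj₁ + Z T.obj₃)
    {X : D} (hX : IsZero X) : Z X = 0 := by
  have hd : Triangle.mk hX.isoZero.hom (0 : (0 : D) ⟶ (0 : D)) 0 ∈ distTriang D := by
    refine isomorphic_distinguished _ (contractible_distinguished X) _ ?_
    refine Triangle.isoMk _ _ (Iso.refl X) hX.isoZero.symm (Iso.refl 0) (hX.eq_of_src _ _) ?_ ?_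
    · apply (isZero_zero D).eq_of_tgt
    · apply (isZero_zero D).eq_of_src
  have h := hZ _ hd
  have h' : Z 0 = Z X + Z 0 := h
  linear_combination -h'

/-- The key inequality: pushing forward along any exact functor does not increase the
generalized norm, since every semistable object of the pushforward has semistable
image. -/
theorem pushforward_stabNorm_le {C : Type u} [Category.{v} C] {D : Type u₂}
    [Category.{v₂} D] [Preadditive D] [HasZeroObject D] [HasShift D ℤ]
    [∀ n : ℤ, (shiftFunctor D n).Additive] [Pretriangulated D]
    (p : C ⥤ D) (σ : PreStab D)
    (hZ : ∀ T ∈ distTriang D, σ.Z T.obj₂ = σ.Z T.obj₁ + σ.Z T.obj₃)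
    (U : D → ℂ) :
    stabNorm (pushforward p σ) (fun E => U (p.obj E)) ≤ stabNorm σ U := by
  refine iSup_le fun E => ?_
  obtain ⟨hE, φ, hφ⟩ := E.2
  by_cases h : IsZero (p.obj E.1)
  · have hz : σ.Z (p.obj E.1) = 0 := zadd_eq_zero_of_isZero hZ h
    have : (pushforward p σ).Z E.1 = 0 := hz
    simp [this]
  · exact le_iSup_of_le
      (⟨p.obj E.1, h, φ, hφ⟩ : {X : D // ¬ IsZero X ∧ ∃ φ : ℝ, X ∈ σ.P φ}) le_rfl

end NormAux

/-- In the Galois setup: (i) for every `σ ∈ Stab(T_L)_p` and every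
group homomorphism `U : K(T_L) → ℂ` one has `‖U ∘ K(p^*)‖_{p_* σ} ≤ ‖U‖_σ`;
(ii) for every `σ' ∈ Stab(T)` whose pullback pair is a locally finite stability
condition and every group homomorphism `U' : K(T) → ℂ` one has
`‖U' ∘ K(p_*)‖_{p^* σ'} ≤ ‖U'‖_{σ'}`. -/
theorem statement_16
    {C₁ : Type u} [Category.{v} C₁] [Preadditive C₁] [HasZeroObject C₁] [HasShift C₁ ℤ]
    [∀ n : ℤ, (shiftFunctor C₁ n).Additive] [Pretriangulated C₁] [HasFiniteBiproducts C₁]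
    {C₂ : Type u₂} [Category.{v₂} C₂] [Preadditive C₂] [HasZeroObject C₂] [HasShift C₂ ℤ]
    [∀ n : ℤ, (shiftFunctor C₂ n).Additive] [Pretriangulated C₂] [HasFiniteBiproducts C₂]
    {G : Type} [Group G] [Fintype G]
    (pstar : C₁ ⥤ C₂) [pstar.CommShift ℤ] [pstar.IsTriangulated]
    (plow : C₂ ⥤ C₁) [plow.CommShift ℤ] [plow.IsTriangulated]
    (gst : G → C₂ ⥤ C₂) [∀ g : G, (gst g).CommShift ℤ] [∀ g : G, (gst g).IsTriangulated]
    [∀ g : G, (gst g).IsEquivalence]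
    (actOne : gst 1 ≅ 𝟭 C₂) (actMul : ∀ g h : G, gst h ⋙ gst g ≅ gst (g * h))
    (pIso : ∀ g : G, pstar ≅ pstar ⋙ gst g)
    (pIsoCocycle : ∀ (g h : G) (E : C₁), (pIso (g * h)).hom.app E =
      (pIso g).hom.app E ≫ (gst g).map ((pIso h).hom.app E) ≫ (actMul g h).hom.app (pstar.obj E))
    (qIso : ∀ g : G, gst g ⋙ plow ≅ plow)
    (ppIso : ∀ E : C₁, plow.obj (pstar.obj E) ≅ ⨁ (fun _ : G => E))
    (ppNat : ∀ {E F : C₁} (f : E ⟶ F),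
      plow.map (pstar.map f) ≫ (ppIso F).hom = (ppIso E).hom ≫ biproduct.map (fun _ => f))
    (qpIso : ∀ X : C₂, pstar.obj (plow.obj X) ≅ ⨁ (fun g : G => (gst g).obj X))
    (qpNat : ∀ {X Y : C₂} (f : X ⟶ Y),
      pstar.map (plow.map f) ≫ (qpIso Y).hom = (qpIso X).hom ≫ biproduct.map (fun g => (gst g).map f))
 :
    (∀ σ : Stab C₂, IsStabilityCondition (pushforward pstar σ.1) →
      ∀ U : C₂ → ℂ, AdditiveOnTriangles U →
        stabNorm (pushforward pstar σ.1) (fun E => U (pstar.obj E)) ≤ stabNorm σ.1 U) ∧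
    (∀ σ' : Stab C₁, IsStabilityCondition (pushforward plow σ'.1) →
      ∀ U' : C₁ → ℂ, AdditiveOnTriangles U' →
        stabNorm (pushforward plow σ'.1) (fun E => U' (plow.obj E)) ≤ stabNorm σ'.1 U') := by
  constructor
  · intro σ _ U _
    exact pushforward_stabNorm_le pstar σ.1 σ.2.1.zadd U
  · intro σ' _ U' _
    exact pushforward_stabNorm_le plow σ'.1 σ'.2.1.zadd U'

end StabilityPaper
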